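/- Let V be a nonempty countable set and b : P(V) → [0,∞] satisfy conditions (0) b(X) = 0 iff X ∈ {∅, V}; (1) b(X) = b(V \ X); (2) submodularity; (3') b(lim X_n) ≤ liminf_n b(X_n) for every ⊆-monotone sequence (X_n); (4) λ_b has only finite values. Then for every u ≠ v ∈ V the infimum λ_b(u,v) is attained: there exists a u-v cut X* with b(X*) = λ_b(u,v). -/

import Mathlib

open Set Filter Topology ENNReal

noncomputable section

/-- `λ_b(u,v)`: the infimum of `b(X)` over all `u-v` cuts `X`
(sets with `u ∈ X` and `v ∉ X`). -/
def lamB {V : Type*} (b : Set V → ℝ≥0∞) (u v : V) : ℝ≥0∞ :=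
  ⨅ (X : Set V) (_ : u ∈ X ∧ v ∉ X), b X

/-- `X` is an optimal `u-v` cut: a `u-v` cut with `b(X) = λ_b(u,v)`. -/
def IsOptCut {V : Type*} (b : Set V → ℝ≥0∞) (u v : V) (X : Set V) : Prop :=
  u ∈ X ∧ v ∉ X ∧ b X = lamB b u v

/-- Finite intersections `X n ∩ X (n+1) ∩ ... ∩ X (n+m)`. -/
def cutInter {V : Type*} (X : ℕ → Set V) (n : ℕ) : ℕ → Set V
  | 0 => X n
  | (m+1) => cutInter X n m ∩ X (n+m+1)

lemma mem_cutInter {V : Type*} (X : ℕ → Set V) (n m : ℕ) (x : V) :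
    x ∈ cutInter X n m ↔ ∀ j ≤ m, x ∈ X (n + j) := by
  induction m with
  | zero => simp [cutInter]
  | succ m ih =>
    simp only [cutInter, Set.mem_inter_iff, ih]
    constructor
    · rintro ⟨h1, h2⟩ j hj
      rcases Nat.lt_succ_iff_lt_or_eq.mp (Nat.lt_succ_of_le hj) with h | h
      · exact h1 j (Nat.lt_succ_iff.mp h)
      · subst h; simpa [← Nat.add_assoc] using h2
    · intro h
      exact ⟨fun j hj => h j (Nat.le_succ_of_le hj),
        by simpa [← Nat.add_assoc] using h (m+1) le_rfl⟩

/-- Under conditions (0), (1), (2), (3') and (4), the infimum `λ_b(u,v)` is attained. -/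
theorem exists_optimal_cut {V : Type*} [Countable V] [Nonempty V] (b : Set V → ℝ≥0∞)
    (h0 : ∀ X : Set V, b X = 0 ↔ X = ∅ ∨ X = Set.univ)
    (h1 : ∀ X : Set V, b Xᶜ = b X)
    (h2 : ∀ X Y : Set V, b (X ∩ Y) + b (X ∪ Y) ≤ b X + b Y)
    (h3m : ∀ X : ℕ → Set V, Monotone X →
      b (⋃ n, X n) ≤ Filter.liminf (fun n => b (X n)) Filter.atTop)
    (h3a : ∀ X : ℕ → Set V, Antitone X →
      b (⋂ n, X n) ≤ Filter.liminf (fun n => b (X n)) Filter.atTop)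
    (h4 : ∀ u v : V, u ≠ v → lamB b u v < ⊤) :
    ∀ u v : V, u ≠ v → ∃ X : Set V, u ∈ X ∧ v ∉ X ∧ b X = lamB b u v := by
  intro u v huv
  set L := lamB b u v with hLdef
  have hLtop : L ≠ ⊤ := (h4 u v huv).ne
  -- every cut has b ≥ L
  have hcut : ∀ Y : Set V, u ∈ Y → v ∉ Y → L ≤ b Y := by
    intro Y hu hv
    exact iInf₂_le Y ⟨hu, hv⟩
  -- choose near-optimal cuts
  have hex : ∀ n : ℕ, ∃ Y : Set V, (u ∈ Y ∧ v ∉ Y) ∧ b Y ≤ L + 2⁻¹ ^ n := by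
    intro n
    have hpos : (2⁻¹ : ℝ≥0∞) ^ n ≠ 0 := pow_ne_zero n (by norm_num)
    have : L < L + 2⁻¹ ^ n := ENNReal.lt_add_right hLtop hpos
    rw [hLdef, lamB] at this
    obtain ⟨Y, hY, hbY⟩ := by
      simpa only [iInf_lt_iff] using this
    exact ⟨Y, hY, hbY.le⟩
  choose X hX hbX using hex
  -- bound on finite intersections
  have hmemu : ∀ n m, u ∈ cutInter X n m := by
    intro n m
    rw [mem_cutInter]
    intro j _
    exact (hX (n + j)).1
  have hmemv : ∀ n m, v ∉ cutInter X n m := by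
    intro n m h
    rw [mem_cutInter] at h
    exact (hX n).2 (by simpa using h 0 (Nat.zero_le m))
  have hbF : ∀ n m, b (cutInter X n m) ≤ L + ∑ j ∈ Finset.range (m+1), 2⁻¹ ^ (n + j) := by
    intro n m
    induction m with
    | zero => simpa [cutInter] using hbX n
    | succ m ih =>
      have hsub := h2 (cutInter X n m) (X (n+m+1))
      have hun : L ≤ b (cutInter X n m ∪ X (n+m+1)) :=
        hcut _ (Or.inl (hmemu n m)) (fun h => h.elim (hmemv n m) (hX (n+m+1)).2)
      have key : b (cutInter X n (m+1)) + L ≤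
          (L + ∑ j ∈ Finset.range (m+2), 2⁻¹ ^ (n + j)) + L := by
        calc b (cutInter X n (m+1)) + L
            ≤ b (cutInter X n m ∩ X (n+m+1)) + b (cutInter X n m ∪ X (n+m+1)) := by
              exact add_le_add_right hun _
          _ ≤ b (cutInter X n m) + b (X (n+m+1)) := hsub
          _ ≤ (L + ∑ j ∈ Finset.range (m+1), 2⁻¹ ^ (n + j)) + (L + 2⁻¹ ^ (n+m+1)) :=
              add_le_add ih (hbX (n+m+1))
          _ = (L + ∑ j ∈ Finset.range (m+2), 2⁻¹ ^ (n + j)) + L := by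
              rw [Finset.sum_range_succ (fun j => (2⁻¹ : ℝ≥0∞) ^ (n + j)) (m+1),
                ← Nat.add_assoc]
              ring
      exact (ENNReal.add_le_add_iff_right hLtop).mp key
  -- tail sum bound: ∑_{j<m+1} 2⁻¹^(n+j) ≤ 2⁻¹^n * 2
  have hsum : ∀ n m : ℕ, (∑ j ∈ Finset.range (m+1), (2⁻¹ : ℝ≥0∞) ^ (n + j)) ≤ 2⁻¹ ^ n * 2 := by
    intro n m
    have h1' : (∑ j ∈ Finset.range (m+1), (2⁻¹ : ℝ≥0∞) ^ (n + j))
        = 2⁻¹ ^ n * ∑ j ∈ Finset.range (m+1), (2⁻¹ : ℝ≥0∞) ^ j := by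
      rw [Finset.mul_sum]
      exact Finset.sum_congr rfl fun j _ => pow_add _ _ _
    rw [h1']
    refine mul_le_mul_right ?_ _
    calc (∑ j ∈ Finset.range (m+1), (2⁻¹ : ℝ≥0∞) ^ j)
        ≤ ∑' j : ℕ, (2⁻¹ : ℝ≥0∞) ^ j := ENNReal.sum_le_tsum _
      _ = (1 - 2⁻¹)⁻¹ := ENNReal.tsum_geometric _
      _ = 2 := by
          rw [show (1 : ℝ≥0∞) - 2⁻¹ = 2⁻¹ by
            rw [ENNReal.sub_eq_of_eq_add (by simp)]
            rw [ENNReal.inv_two_add_inv_two]]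
          simp
  -- tails
  set W : ℕ → Set V := fun n => ⋂ m, cutInter X n m with hWdef
  have hWmem : ∀ n x, x ∈ W n ↔ ∀ k, n ≤ k → x ∈ X k := by
    intro n x
    simp only [hWdef, Set.mem_iInter, mem_cutInter]
    constructor
    · intro h k hk
      have := h (k - n) (k - n) le_rfl
      rwa [Nat.add_sub_cancel' hk] at this
    · intro h m j hj
      exact h (n + j) (Nat.le_add_right _ _)
  have hWanti : ∀ n, Antitone (cutInter X n) := by
    intro n m₁ m₂ hm x hx
    rw [mem_cutInter] at hx ⊢
    exact fun j hj => hx j (hj.trans hm)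
  have hbW : ∀ n, b (W n) ≤ L + 2⁻¹ ^ n * 2 := by
    intro n
    refine (h3a (cutInter X n) (hWanti n)).trans ?_
    refine (Filter.liminf_le_liminf (Filter.Eventually.of_forall fun m =>
      (hbF n m).trans (add_le_add_right (hsum n m) L)) ).trans ?_
    simp [Filter.liminf_const]
  have hWmono : Monotone W := by
    intro n₁ n₂ hn x hx
    rw [hWmem] at hx ⊢
    exact fun k hk => hx k (hn.trans hk)
  have hWu : ∀ n, u ∈ W n := fun n => Set.mem_iInter.mpr (hmemu n)
  have hWv : ∀ n, v ∉ W n := fun n h => hmemv n 0 (Set.mem_iInter.mp h 0)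
  refine ⟨⋃ n, W n, Set.mem_iUnion.mpr ⟨0, hWu 0⟩,
    fun h => (Set.mem_iUnion.mp h).elim (fun n hn => hWv n hn), ?_⟩
  have hle : b (⋃ n, W n) ≤ L := by
    refine (h3m W hWmono).trans ?_
    have htend : Tendsto (fun n : ℕ => L + (2⁻¹ : ℝ≥0∞) ^ n * 2) atTop (𝓝 L) := by
      have h0' : Tendsto (fun n : ℕ => (2⁻¹ : ℝ≥0∞) ^ n) atTop (𝓝 0) :=
        ENNReal.tendsto_pow_atTop_nhds_zero_of_lt_one (by norm_num)
      have h1' : Tendsto (fun n : ℕ => (2⁻¹ : ℝ≥0∞) ^ n * 2) atTop (𝓝 0) := by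
        simpa using ENNReal.Tendsto.mul_const h0' (Or.inr (by norm_num))
      simpa using Filter.Tendsto.const_add L h1'
    calc liminf (fun n => b (W n)) atTop
        ≤ liminf (fun n : ℕ => L + 2⁻¹ ^ n * 2) atTop :=
          Filter.liminf_le_liminf (Filter.Eventually.of_forall hbW)
      _ = L := htend.liminf_eq
  exact le_antisymm hle (hcut _ (Set.mem_iUnion.mpr ⟨0, hWu 0⟩)
    (fun h => (Set.mem_iUnion.mp h).elim (fun n hn => hWv n hn)))
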